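/- arXiv:2510.23517 — 2 statements merged into one kernel-verified Lean document; each statement's English description precedes it below -/
import Mathlib

section
/- In L = Set^{[R]} with Day convolution tensor, for an object E the following are equivalent: (1) E lies in the Drinfeld center of L, i.e. E admits a natural family of isomorphisms θ_A : E ⊗ A ≅ A ⊗ E satisfying θ_{A⊗B} = (θ_A ⊗ id);(id ⊗ θ_B); (2) E is resource-free: E(l) = ∅ for every non-empty list l; (3) there exists a morphism E → I. -/
/- Shared preamble: the presheaf category L = Set^{[R]} over the discrete
   monoidal category of lists of naturals under concatenation, with the Day
   convolution tensor, described concretely. -/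

namespace LDay

/-- Objects of L = Set^{[R]}: families of sets indexed by lists of resource
    names (the base category is discrete, so no action on morphisms). -/
abbrev Obj : Type 1 := List ℕ → Type

/-- Morphisms of L. -/
abbrev Hom (A B : Obj) : Type := ∀ l, A l → B l

def idH (A : Obj) : Hom A A := fun _ a => a

def comp {A B C : Obj} (f : Hom A B) (g : Hom B C) : Hom A C :=
  fun l a => g l (f l a)

/-- Day convolution tensor: (A ⊗ B)(l) = Σ_{l₁ ++ l₂ = l} A(l₁) × B(l₂). -/
structure DayT (A B : Obj) (l : List ℕ) : Type where
  l₁ : List ℕ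
  l₂ : List ℕ
  eq : l₁ ++ l₂ = l
  a : A l₁
  b : B l₂

def Day (A B : Obj) : Obj := fun l => DayT A B l

def dayMap {A A' B B' : Obj} (f : Hom A A') (g : Hom B B') :
    Hom (Day A B) (Day A' B') :=
  fun _ d => ⟨d.l₁, d.l₂, d.eq, f d.l₁ d.a, g d.l₂ d.b⟩

/-- The unit I: indicator of the empty list. -/
def Iobj : Obj := fun l => PLift (l = [])

/-- The terminal presheaf [R], [R](l) = {l}. -/
def Full : Obj := fun _ => PUnit

/-- The presheaf of resources: R(l) = {n} if l = [n], ∅ otherwise. -/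
def Rp : Obj := fun l => { n : ℕ // l = [n] }

/-- Left internal hom: (A ⊸ B)(l₂) = ∀ l₁, A(l₁) → B(l₁ ++ l₂). -/
def lhom (A B : Obj) : Obj := fun l₂ => ∀ l₁, A l₁ → B (l₁ ++ l₂)

/-- Right internal hom: (A ⊸_r B)(l₁) = ∀ l₂, A(l₂) → B(l₁ ++ l₂). -/
def rhom (A B : Obj) : Obj := fun l₁ => ∀ l₂, A l₂ → B (l₁ ++ l₂)

def lhomMap {A B B' : Obj} (g : Hom B B') : Hom (lhom A B) (lhom A B') :=
  fun _ k l₁ a => g _ (k l₁ a)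

def rhomMap {A B B' : Obj} (g : Hom B B') : Hom (rhom A B) (rhom A B') :=
  fun _ k l₂ a => g _ (k l₂ a)

/-- Pointwise coproduct. -/
def sum' (A B : Obj) : Obj := fun l => A l ⊕ B l

def sumMap {A A' B B' : Obj} (f : Hom A A') (g : Hom B B') :
    Hom (sum' A B) (sum' A' B') :=
  fun l s => Sum.map (f l) (g l) s

def inlH {A B : Obj} : Hom A (sum' A B) := fun _ a => Sum.inl a
def inrH {A B : Obj} : Hom B (sum' A B) := fun _ b => Sum.inr b

/-- Associator of the Day tensor. -/
def dayAssoc {A B C : Obj} : Hom (Day (Day A B) C) (Day A (Day B C)) :=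
  fun _ d =>
    ⟨d.a.l₁, d.a.l₂ ++ d.l₂, by rw [← List.append_assoc, d.a.eq, d.eq],
      d.a.a, ⟨d.a.l₂, d.l₂, rfl, d.a.b, d.b⟩⟩

/-- Inverse associator of the Day tensor. -/
def dayAssocInv {A B C : Obj} : Hom (Day A (Day B C)) (Day (Day A B) C) :=
  fun _ d =>
    ⟨d.l₁ ++ d.b.l₁, d.b.l₂, by rw [List.append_assoc, d.b.eq, d.eq],
      ⟨d.l₁, d.b.l₁, rfl, d.a, d.b.a⟩, d.b.b⟩

/-- Left unitor of the Day tensor. -/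
def dayLUnit {B : Obj} : Hom (Day Iobj B) B := fun l d =>
  (show d.l₂ = l by have h := d.eq; rw [d.a.down] at h; simpa using h) ▸ d.b

/-- The allocation monad T A = [R] ⊸_r (A ⊗ [R]). -/
def Talloc (A : Obj) : Obj := rhom Full (Day A Full)

def tallocMap {A B : Obj} (f : Hom A B) : Hom (Talloc A) (Talloc B) :=
  fun _ m l₂ u => dayMap f (idH Full) _ (m l₂ u)

/-- Unit of the allocation monad. -/
def tallocEta (A : Obj) : Hom A (Talloc A) :=
  fun l a l₂ _ => ⟨l, l₂, rfl, a, PUnit.unit⟩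

/-- Multiplication of the allocation monad. -/
def tallocMu (A : Obj) : Hom (Talloc (Talloc A)) (Talloc A) :=
  fun _ m l₂ u =>
    let d := m l₂ u
    d.eq ▸ (d.a d.l₂ d.b)

end LDay

open LDay

/-- If `E` is resource-free, any inhabitant of `E l₁` forces `l₁ = []`. -/
lemma key_empty {E : Obj} (hE : ∀ l : List ℕ, l ≠ [] → IsEmpty (E l))
    {l₁ : List ℕ} (a : E l₁) : l₁ = [] := by
  by_contra h
  exact (hE _ h).false a

/-- in L = Set^{[R]}, for an object E the following are
    equivalent: (1) E lies in the Drinfeld center of L (it has a natural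
    family of isomorphisms E ⊗ A ≅ A ⊗ E satisfying
    θ_{A⊗B} = (θ_A ⊗ id);(id ⊗ θ_B)); (2) E is resource-free; (3) there is a
    morphism E → I. -/
theorem drinfeld_center_characterisation (E : Obj) :
    ((∃ θ : ∀ (X : Obj) (l : List ℕ), Day E X l ≃ Day X E l,
      -- naturality in X
      (∀ (X Y : Obj) (f : Hom X Y) (l : List ℕ) (d : Day E X l),
        θ Y l (dayMap (idH E) f l d) = dayMap f (idH E) l (θ X l d)) ∧
      -- the hexagon/multiplicativity condition of the Drinfeld center
      (∀ A B : Obj,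
        (fun l (d : Day E (Day A B) l) => (θ (Day A B) l d : Day (Day A B) E l))
          = comp (dayAssocInv (A := E) (B := A) (C := B))
              (comp (dayMap (fun l x => θ A l x) (idH B))
                (comp dayAssoc
                  (comp (dayMap (idH A) (fun l x => θ B l x))
                    dayAssocInv)))))
      ↔ (∀ l : List ℕ, l ≠ [] → IsEmpty (E l))) ∧
    ((∀ l : List ℕ, l ≠ [] → IsEmpty (E l)) ↔ Nonempty (Hom E Iobj)) := by
  constructor
  · constructor
    · rintro ⟨θ, -, -⟩ l hl
      obtain ⟨h, t, rfl⟩ := List.exists_cons_of_ne_nil hl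
      constructor
      intro e
      have d := θ (fun m => PLift (m = [h + 1])) ((h :: t) ++ [h + 1])
        ⟨h :: t, [h + 1], rfl, e, ⟨rfl⟩⟩
      have h1 : d.l₁ = [h + 1] := d.a.down
      have h2 := d.eq
      rw [h1] at h2
      have h3 := congrArg List.head? h2
      simp [List.cons_append] at h3
    · intro hE
      refine ⟨fun X l =>
        { toFun := fun d => ⟨d.l₂, d.l₁, by
            have h := key_empty hE d.a
            have h2 := d.eq
            rw [h, List.nil_append] at h2
            rw [h, List.append_nil]; exact h2, d.b, d.a⟩
          invFun := fun d => ⟨d.l₂, d.l₁, by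
            have h := key_empty hE d.b
            have h2 := d.eq
            rw [h, List.append_nil] at h2
            rw [h, List.nil_append]; exact h2, d.b, d.a⟩
          left_inv := fun d => rfl
          right_inv := fun d => rfl }, fun X Y f l d => rfl, ?_⟩
      intro A B
      funext l d
      obtain ⟨l₁, l₂, eq, a, ⟨bl₁, bl₂, beq, ba, bb⟩⟩ := d
      subst beq
      subst eq
      rfl
  · constructor
    · intro hE
      exact ⟨fun l e => PLift.up (key_empty hE e)⟩
    · rintro ⟨f⟩ l hl
      exact ⟨fun e => hl (f l e).down⟩
end

section
/- In L = Set^{[R]}, if E is a resource-free object (E(l) = ∅ for all non-empty l), then the monad T𝓔 = T(- ⊕ E), where T is the allocation monad, has a left strength: a natural family Γ ⊗ T(A ⊕ E) → T((Γ ⊗ A) ⊕ E) satisfying the strength laws. -/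
open LDay

/-- The monad T(- ⊕ E) on L, T being the allocation monad. -/
def TE (E A : Obj) : Obj := Talloc (sum' A E)

def teMapP (E : Obj) {A B : Obj} (f : Hom A B) : Hom (TE E A) (TE E B) :=
  tallocMap (sumMap f (idH E))

def teEtaP (E A : Obj) : Hom A (TE E A) := comp inlH (tallocEta (sum' A E))

/-- The distributive law (T X ⊕ E) ⟶ T (X ⊕ E). -/
def dlawP (E X : Obj) : Hom (sum' (Talloc X) E) (Talloc (sum' X E)) :=
  fun l s => match s with
  | Sum.inl t => tallocMap inlH l t
  | Sum.inr e => tallocEta (sum' X E) l (Sum.inr e)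

def teMuP (E A : Obj) : Hom (TE E (TE E A)) (TE E A) :=
  comp (tallocMap (dlawP E (sum' A E)))
    (comp (tallocMu (sum' (sum' A E) E))
      (tallocMap (fun _ s => match s with
        | Sum.inl x => x
        | Sum.inr e => Sum.inr e)))

/-- Extensionality for Day-with-Full elements: the second list and the
    unit component are determined. -/
theorem dayT_ext {C : Obj} {L : List ℕ} (x y : DayT C Full L)
    (h1 : x.l₁ = y.l₁) (ha : HEq x.a y.a) : x = y := by
  rcases x with ⟨x1, x2, xeq, xa, xb⟩
  rcases y with ⟨y1, y2, yeq, ya, yb⟩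
  dsimp at h1 ha
  subst h1
  have h2 : x2 = y2 := List.append_cancel_left (xeq.trans yeq.symm)
  subst h2
  cases ha
  cases xb; cases yb
  rfl

/-- Transport of Day-with-Full elements along list equalities. -/
theorem cast_day {C : Obj} {L L' : List ℕ} (h : L = L') (x : DayT C Full L) :
    (h ▸ x : DayT C Full L') = ⟨x.l₁, x.l₂, x.eq.trans h, x.a, x.b⟩ := by
  subst h; rfl

/-- Core of the left strength, on Day elements. -/
def sigmaAux (E : Obj) (hE : ∀ l : List ℕ, l ≠ [] → IsEmpty (E l))
    (Γ A : Obj) (l₁ l₂ l l₃ : List ℕ) (heq : l₁ ++ l₂ = l) (γ : Γ l₁)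
    (m : DayT (sum' A E) Full (l₂ ++ l₃)) :
    DayT (sum' (Day Γ A) E) Full (l ++ l₃) :=
  match m.a with
  | Sum.inl a =>
      ⟨l₁ ++ m.l₁, m.l₂,
        by rw [List.append_assoc, m.eq, ← List.append_assoc, heq],
        Sum.inl ⟨l₁, m.l₁, rfl, γ, a⟩, PUnit.unit⟩
  | Sum.inr e =>
      if h : m.l₁ = [] then
        ⟨m.l₁, l ++ l₃, by rw [h]; rfl, Sum.inr e, PUnit.unit⟩
      else ((hE m.l₁ h).false e).elim

/-- The left strength. -/
def sigmaP (E : Obj) (hE : ∀ l : List ℕ, l ≠ [] → IsEmpty (E l))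
    (Γ A : Obj) : Hom (Day Γ (TE E A)) (TE E (Day Γ A)) :=
  fun l d l₃ _ =>
    sigmaAux E hE Γ A d.l₁ d.l₂ l l₃ d.eq d.a (d.b l₃ PUnit.unit)

theorem sigmaAux_nat (E : Obj) (hE : ∀ l : List ℕ, l ≠ [] → IsEmpty (E l))
    (Γ Γ' A A' : Obj) (f : Hom Γ Γ') (g : Hom A A')
    (l₁ l₂ l l₃ : List ℕ) (heq : l₁ ++ l₂ = l) (γ : Γ l₁)
    (m : DayT (sum' A E) Full (l₂ ++ l₃)) :
    sigmaAux E hE Γ' A' l₁ l₂ l l₃ heq (f l₁ γ)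
        (dayMap (sumMap g (idH E)) (idH Full) _ m)
      = dayMap (sumMap (dayMap f g) (idH E)) (idH Full) _
          (sigmaAux E hE Γ A l₁ l₂ l l₃ heq γ m) := by
  rcases m with ⟨m₁, m₂, meq, ma | e, mb⟩
  · rfl
  · simp only [sigmaAux, dayMap, sumMap, Sum.map_inr, idH]
    by_cases h : m₁ = []
    · subst h
      rfl
    · exact ((hE m₁ h).false e).elim

theorem sigmaP_nat (E : Obj) (hE : ∀ l : List ℕ, l ≠ [] → IsEmpty (E l))
    (Γ Γ' A A' : Obj) (f : Hom Γ Γ') (g : Hom A A') :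
    comp (dayMap f (teMapP E g)) (sigmaP E hE Γ' A')
      = comp (sigmaP E hE Γ A) (teMapP E (dayMap f g)) := by
  funext l d
  funext l₃ u
  cases u
  exact sigmaAux_nat E hE Γ Γ' A A' f g d.l₁ d.l₂ l l₃ d.eq d.a (d.b l₃ PUnit.unit)

theorem sigmaP_unit (E : Obj) (hE : ∀ l : List ℕ, l ≠ [] → IsEmpty (E l)) (Γ A : Obj) :
    comp (dayMap (idH Γ) (teEtaP E A)) (sigmaP E hE Γ A) = teEtaP E (Day Γ A) := by
  funext l d
  funext l₃ u
  cases u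
  rcases d with ⟨l₁, l₂, heq, γ, b⟩
  subst heq
  rfl

theorem sigmaAux_unitor (E : Obj) (hE : ∀ l : List ℕ, l ≠ [] → IsEmpty (E l))
    (A : Obj) (l₂ l₃ : List ℕ) (m : DayT (sum' A E) Full (l₂ ++ l₃)) :
    dayMap (sumMap (dayLUnit (B := A)) (idH E)) (idH Full) _
        (sigmaAux E hE Iobj A [] l₂ ([] ++ l₂) l₃ rfl ⟨rfl⟩ m) = m := by
  rcases m with ⟨m₁, m₂, meq, ma | e, mb⟩
  · cases mb; rfl
  · cases mb
    simp only [sigmaAux, dayMap, sumMap, Sum.map_inr, idH]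
    by_cases h : m₁ = []
    · subst h
      exact dayT_ext _ _ rfl HEq.rfl
    · exact ((hE m₁ h).false e).elim

theorem sigmaP_unitor (E : Obj) (hE : ∀ l : List ℕ, l ≠ [] → IsEmpty (E l)) (A : Obj) :
    comp (sigmaP E hE Iobj A) (teMapP E dayLUnit) = dayLUnit (B := TE E A) := by
  funext l d
  funext l₃ u
  cases u
  rcases d with ⟨l₁, l₂, heq, ⟨pl⟩, t⟩
  subst pl
  subst heq
  exact sigmaAux_unitor E hE A l₂ l₃ (t l₃ PUnit.unit)

theorem sum_inl_heq {A A' B B' : Type} (hA : A = A') (hB : B = B')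
    {x : A} {y : A'} (h : HEq x y) :
    HEq (Sum.inl (β := B) x) (Sum.inl (β := B') y) := by
  subst hA; subst hB; cases h; rfl

theorem dayT_heq {Γ A : Obj} {L L' : List ℕ} (h : L = L')
    {x : DayT Γ A L} {y : DayT Γ A L'}
    (h1 : x.l₁ = y.l₁) (h2 : x.l₂ = y.l₂) (ha : HEq x.a y.a)
    (hb : HEq x.b y.b) : HEq x y := by
  subst h
  rcases x with ⟨x1, x2, xeq, xa, xb⟩
  rcases y with ⟨y1, y2, yeq, ya, yb⟩
  dsimp at h1 h2 ha hb
  subst h1; subst h2; cases ha; cases hb; rfl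

theorem sigmaAux_assoc (E : Obj) (hE : ∀ l : List ℕ, l ≠ [] → IsEmpty (E l))
    (Γ Δ A : Obj) (g₁ g₂ l₂ L l₃ : List ℕ) (γ : Γ g₁) (δ : Δ g₂)
    (heq : (g₁ ++ g₂) ++ l₂ = L) (pf : g₁ ++ (g₂ ++ l₂) = L)
    (m : DayT (sum' A E) Full (l₂ ++ l₃)) :
    dayMap (sumMap (dayAssoc (A := Γ) (B := Δ) (C := A)) (idH E)) (idH Full) _
        (sigmaAux E hE (Day Γ Δ) A (g₁ ++ g₂) l₂ L l₃ heq ⟨g₁, g₂, rfl, γ, δ⟩ m)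
      = sigmaAux E hE Γ (Day Δ A) g₁ (g₂ ++ l₂) L l₃ pf γ
          (sigmaAux E hE Δ A g₂ l₂ (g₂ ++ l₂) l₃ rfl δ m) := by
  rcases m with ⟨m₁, m₂, meq, ma | e, mb⟩
  · simp only [sigmaAux, dayMap, sumMap, Sum.map_inl, idH, dayAssoc]
    apply dayT_ext
    · exact List.append_assoc g₁ g₂ m₁
    · dsimp only
      apply sum_inl_heq (congrArg (Day Γ (Day Δ A)) (List.append_assoc g₁ g₂ m₁))
        (congrArg E (List.append_assoc g₁ g₂ m₁))
      exact dayT_heq (List.append_assoc g₁ g₂ m₁) rfl rfl HEq.rfl HEq.rfl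
  · simp only [sigmaAux, dayMap, sumMap, Sum.map_inr, idH]
    by_cases h : m₁ = []
    · subst h
      rfl
    · exact ((hE m₁ h).false e).elim

theorem sigmaP_assoc (E : Obj) (hE : ∀ l : List ℕ, l ≠ [] → IsEmpty (E l)) (Γ Δ A : Obj) :
    comp (sigmaP E hE (Day Γ Δ) A) (teMapP E dayAssoc)
      = comp dayAssoc (comp (dayMap (idH Γ) (sigmaP E hE Δ A)) (sigmaP E hE Γ (Day Δ A))) := by
  funext l d
  funext l₃ u
  cases u
  rcases d with ⟨l₁, l₂, heq, ⟨g₁, g₂, geq, γ, δ⟩, t⟩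
  subst geq
  subst heq
  exact sigmaAux_assoc E hE Γ Δ A g₁ g₂ l₂ _ l₃ γ δ rfl
    (by rw [← List.append_assoc]) (t l₃ PUnit.unit)


/-- The elementwise form of the multiplication of T(- ⊕ E). -/
def muCore (E A : Obj) {L : List ℕ} (m : DayT (sum' (TE E A) E) Full L) :
    DayT (sum' A E) Full L :=
  match m with
  | ⟨_, m₂, meq, Sum.inl tt, mb⟩ =>
      let p := tt m₂ mb
      ⟨p.l₁, p.l₂, p.eq.trans meq, p.a, p.b⟩
  | ⟨m₁, m₂, meq, Sum.inr e, mb⟩ => ⟨m₁, m₂, meq, Sum.inr e, mb⟩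

theorem muCore_eq (E A : Obj) {L : List ℕ}
    (m : DayT (sum' (TE E A) E) Full L) :
    dayMap (fun _ s => match s with
        | Sum.inl x => x
        | Sum.inr e => Sum.inr e) (idH Full) L
      (m.eq ▸ ((dlawP E (sum' A E) m.l₁ m.a) m.l₂ m.b))
      = muCore E A m := by
  rcases m with ⟨m₁, m₂, meq, ma | e, mb⟩ <;> subst meq <;> rfl

theorem sigmaAux_mu_inl (E : Obj) (hE : ∀ l : List ℕ, l ≠ [] → IsEmpty (E l))
    (Γ A : Obj) (l₁ m₁ m₂ l₂ l₃ L : List ℕ) (heq : l₁ ++ l₂ = L)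
    (meq : m₁ ++ m₂ = l₂ ++ l₃) (pf2 : (l₁ ++ m₁) ++ m₂ = L ++ l₃)
    (γ : Γ l₁) (p : DayT (sum' A E) Full (m₁ ++ m₂)) :
    sigmaAux E hE Γ A l₁ l₂ L l₃ heq γ ⟨p.l₁, p.l₂, p.eq.trans meq, p.a, p.b⟩
      = ⟨(sigmaAux E hE Γ A l₁ m₁ (l₁ ++ m₁) m₂ rfl γ p).l₁,
         (sigmaAux E hE Γ A l₁ m₁ (l₁ ++ m₁) m₂ rfl γ p).l₂,
         (sigmaAux E hE Γ A l₁ m₁ (l₁ ++ m₁) m₂ rfl γ p).eq.trans pf2,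
         (sigmaAux E hE Γ A l₁ m₁ (l₁ ++ m₁) m₂ rfl γ p).a,
         (sigmaAux E hE Γ A l₁ m₁ (l₁ ++ m₁) m₂ rfl γ p).b⟩ := by
  rcases p with ⟨p₁, p₂, peq, pa | e, pb⟩
  · exact dayT_ext _ _ rfl HEq.rfl
  · simp only [sigmaAux]
    by_cases h : p₁ = []
    · subst h
      simp only [dif_pos rfl]
      exact dayT_ext _ _ rfl HEq.rfl
    · exact ((hE p₁ h).false e).elim

theorem sigmaAux_mu (E : Obj) (hE : ∀ l : List ℕ, l ≠ [] → IsEmpty (E l))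
    (Γ A : Obj) (l₁ l₂ L l₃ : List ℕ) (heq : l₁ ++ l₂ = L) (γ : Γ l₁)
    (m : DayT (sum' (TE E A) E) Full (l₂ ++ l₃)) :
    sigmaAux E hE Γ A l₁ l₂ L l₃ heq γ (muCore E A m)
      = muCore E (Day Γ A)
          (dayMap (sumMap (sigmaP E hE Γ A) (idH E)) (idH Full) _
            (sigmaAux E hE Γ (TE E A) l₁ l₂ L l₃ heq γ m)) := by
  rcases m with ⟨m₁, m₂, meq, tt | e, mb⟩
  · cases mb
    exact sigmaAux_mu_inl E hE Γ A l₁ m₁ m₂ l₂ l₃ L heq meq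
      (by rw [List.append_assoc, meq, ← List.append_assoc, heq]) γ (tt m₂ PUnit.unit)
  · simp only [muCore, sigmaAux, dayMap, sumMap, Sum.map_inr, idH]
    by_cases h : m₁ = []
    · subst h
      rfl
    · exact ((hE m₁ h).false e).elim

theorem sigmaP_mu (E : Obj) (hE : ∀ l : List ℕ, l ≠ [] → IsEmpty (E l)) (Γ A : Obj) :
    comp (dayMap (idH Γ) (teMuP E A)) (sigmaP E hE Γ A)
      = comp (sigmaP E hE Γ (TE E A))
          (comp (teMapP E (sigmaP E hE Γ A)) (teMuP E (Day Γ A))) := by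
  funext l d
  funext l₃ u
  cases u
  rcases d with ⟨l₁, l₂, heq, γ, t⟩
  exact (congrArg (sigmaAux E hE Γ A l₁ l₂ l l₃ heq γ)
      (muCore_eq E A (t l₃ PUnit.unit))).trans
    ((sigmaAux_mu E hE Γ A l₁ l₂ l l₃ heq γ (t l₃ PUnit.unit)).trans
      (muCore_eq E (Day Γ A) _).symm)

/-- in L = Set^{[R]}, if E is resource-free (central) then the
    monad T(- ⊕ E) has a left strength Γ ⊗ T(A ⊕ E) ⟶ T((Γ ⊗ A) ⊕ E),
    natural and satisfying the strength laws. -/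
theorem te_left_strength_of_resource_free (E : Obj)
    (hE : ∀ l : List ℕ, l ≠ [] → IsEmpty (E l)) :
    ∃ σ : ∀ Γ A : Obj, Hom (Day Γ (TE E A)) (TE E (Day Γ A)),
      -- naturality in Γ and in A
      (∀ (Γ Γ' A A' : Obj) (f : Hom Γ Γ') (g : Hom A A'),
        comp (dayMap f (teMapP E g)) (σ Γ' A')
          = comp (σ Γ A) (teMapP E (dayMap f g))) ∧
      -- compatibility with the unit of T(- ⊕ E)
      (∀ Γ A : Obj,
        comp (dayMap (idH Γ) (teEtaP E A)) (σ Γ A) = teEtaP E (Day Γ A)) ∧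
      -- compatibility with the multiplication of T(- ⊕ E)
      (∀ Γ A : Obj,
        comp (dayMap (idH Γ) (teMuP E A)) (σ Γ A)
          = comp (σ Γ (TE E A)) (comp (teMapP E (σ Γ A)) (teMuP E (Day Γ A)))) ∧
      -- compatibility with the left unitor
      (∀ A : Obj,
        comp (σ Iobj A) (teMapP E dayLUnit) = dayLUnit (B := TE E A)) ∧
      -- compatibility with the associator
      (∀ Γ Δ A : Obj,
        comp (σ (Day Γ Δ) A) (teMapP E dayAssoc)
          = comp dayAssoc (comp (dayMap (idH Γ) (σ Δ A)) (σ Γ (Day Δ A)))) :=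
  ⟨sigmaP E hE,
    fun Γ Γ' A A' f g => sigmaP_nat E hE Γ Γ' A A' f g,
    fun Γ A => sigmaP_unit E hE Γ A,
    fun Γ A => sigmaP_mu E hE Γ A,
    fun A => sigmaP_unitor E hE A,
    fun Γ Δ A => sigmaP_assoc E hE Γ Δ A⟩
end
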